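/- For n ≥ 3 and 2 ≤ i ≤ n, let σ_i ∈ SL(n,ℤ) be the linear map sending e₁ ↦ -e_i, e_i ↦ e₁, and e_j ↦ e_j for j ∉ {1,i}, and let α_i ∈ SL(n,ℤ) send e₁ ↦ e₁ + 2e_i, e_i ↦ e₁ + 3e_i, and e_j ↦ e_j for j ∉ {1,i}. If A ∈ GL(n,ℤ) satisfies A(e_i) = ±e_i for all 2 ≤ i ≤ n and α_j A α_j⁻¹(e₁) = ±e₁ for all 2 ≤ j ≤ n, then A = I or A = -I. -/

import Mathlib

open Matrix

/-- The matrix of `σ_i : e₁ ↦ -e_i, e_i ↦ e₁, e_j ↦ e_j (j ∉ {1,i})`,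
where `z` is the index of the first basis vector. -/
def sigMat (n : ℕ) (z i : Fin n) : Matrix (Fin n) (Fin n) ℤ :=
  Matrix.of fun a b =>
    if a = i ∧ b = z then -1
    else if a = z ∧ b = i then 1
    else if a = b ∧ a ≠ z ∧ a ≠ i then 1 else 0

/-- The matrix of `α_i : e₁ ↦ e₁ + 2e_i, e_i ↦ e₁ + 3e_i, e_j ↦ e_j (j ∉ {1,i})`,
where `z` is the index of the first basis vector. -/
def alphaMat (n : ℕ) (z i : Fin n) : Matrix (Fin n) (Fin n) ℤ :=
  Matrix.of fun a b =>
    if a = z ∧ b = z then 1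
    else if a = i ∧ b = z then 2
    else if a = z ∧ b = i then 1
    else if a = i ∧ b = i then 3
    else if a = b then 1 else 0

/-- The inverse of `alphaMat`. -/
def betaMat (n : ℕ) (z i : Fin n) : Matrix (Fin n) (Fin n) ℤ :=
  Matrix.of fun a b =>
    if a = z ∧ b = z then 3
    else if a = i ∧ b = z then -2
    else if a = z ∧ b = i then -1
    else if a = i ∧ b = i then 1
    else if a = b then 1 else 0

lemma alpha_fact (n : ℕ) (z i : Fin n) (h : i ≠ z) :
    alphaMat n z i = transvection i z (2:ℤ) * transvection z i (1:ℤ) := by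
  have h1 : transvection i z (2:ℤ) * transvection z i (1:ℤ)
      = 1 + single i z 2 + single z i 1 + single i i 2 := by
    rw [transvection, transvection, add_mul, mul_add, mul_add, one_mul, mul_one,
      single_mul_single_same]
    norm_num
    abel
  rw [h1]
  ext a b
  by_cases haz : a = z <;> by_cases hai : a = i <;> by_cases hbz : b = z <;>
    by_cases hbi : b = i <;>
    simp_all [alphaMat, Matrix.one_apply, Matrix.single, Matrix.of_apply, eq_comm]

lemma beta_fact (n : ℕ) (z i : Fin n) (h : i ≠ z) :
    betaMat n z i = transvection z i (-1:ℤ) * transvection i z (-2:ℤ) := by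
  have h1 : transvection z i (-1:ℤ) * transvection i z (-2:ℤ)
      = 1 + single z i (-1) + single i z (-2) + single z z 2 := by
    rw [transvection, transvection, add_mul, mul_add, mul_add, one_mul, mul_one,
      single_mul_single_same]
    norm_num
    abel
  rw [h1]
  ext a b
  by_cases haz : a = z <;> by_cases hai : a = i <;> by_cases hbz : b = z <;>
    by_cases hbi : b = i <;>
    simp_all [betaMat, Matrix.one_apply, Matrix.single, Matrix.of_apply, eq_comm]

lemma sig_fact (n : ℕ) (z i : Fin n) (h : i ≠ z) :
    sigMat n z i
      = transvection i z (-1:ℤ) * transvection z i (1:ℤ) * transvection i z (-1:ℤ) := by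
  have h1 : transvection i z (-1:ℤ) * transvection z i (1:ℤ)
      = 1 + single z i 1 + single i z (-1) + single i i (-1) := by
    rw [transvection, transvection, add_mul, mul_add, mul_add, one_mul, mul_one,
      single_mul_single_same]
    norm_num
    abel
  have h2 : single i z (-1:ℤ) * single i z (-1:ℤ) = 0 :=
    single_mul_single_of_ne (c := (-1:ℤ)) i z i
      (Ne.symm h) (-1)
  rw [h1, transvection, mul_add, mul_one, add_mul, add_mul, add_mul, one_mul]
  rw [single_mul_single_same, h2, single_mul_single_same]
  clear h1 h2
  ext a b
  by_cases haz : a = z <;> by_cases hai : a = i <;> by_cases hbz : b = z <;>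
    by_cases hbi : b = i <;>
    simp_all [sigMat, Matrix.one_apply, Matrix.single, Matrix.of_apply, eq_comm]

lemma alpha_beta (n : ℕ) (z i : Fin n) (h : i ≠ z) :
    alphaMat n z i * betaMat n z i = 1 := by
  rw [alpha_fact n z i h, beta_fact n z i h, mul_assoc,
    ← mul_assoc (transvection z i (1:ℤ)),
    transvection_mul_transvection_same z i h.symm]
  norm_num
  rw [transvection_mul_transvection_same i z h]
  norm_num

lemma mulVec_e {n : ℕ} (M : Matrix (Fin n) (Fin n) ℤ) (i : Fin n) :
    M *ᵥ (fun j => if j = i then (1:ℤ) else 0) = fun k => M k i := by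
  ext k
  simp [Matrix.mulVec, dotProduct, mul_ite, Finset.sum_ite_eq']

/-- if `A ∈ GL(n,ℤ)` satisfies `A e_i = ±e_i` for all `i ≠ 0` and
`α_j A α_j⁻¹ e₁ = ±e₁` for all `j ≠ 0`, then `A = ±I`.  (The matrices `σ_i` and
`α_i` all lie in `SL(n,ℤ)`.) -/
theorem stmt_1 (n : ℕ) (hn : 3 ≤ n) (A : Matrix.GeneralLinearGroup (Fin n) ℤ)
    (z : Fin n) (hz : z = ⟨0, by omega⟩)
    (e : Fin n → Fin n → ℤ) (he : e = fun i j => if j = i then 1 else 0)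
    (hA : ∀ i : Fin n, i ≠ z →
      A.1.mulVec (e i) = e i ∨ A.1.mulVec (e i) = -(e i))
    (hconj : ∀ j : Fin n, j ≠ z →
      (alphaMat n z j * A.1 * (alphaMat n z j)⁻¹).mulVec (e z) = e z ∨
      (alphaMat n z j * A.1 * (alphaMat n z j)⁻¹).mulVec (e z) = -(e z)) :
    ((∀ i : Fin n, i ≠ z → (sigMat n z i).det = 1 ∧ (alphaMat n z i).det = 1) ∧
      (A.1 = 1 ∨ A.1 = -1)) := by
  set B := A.1 with hB
  constructor
  · intro i hi
    constructor
    · rw [sig_fact n z i hi, det_mul, det_mul, det_transvection_of_ne i z hi,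
        det_transvection_of_ne z i hi.symm]
      norm_num
    · rw [alpha_fact n z i hi, det_mul, det_transvection_of_ne i z hi,
        det_transvection_of_ne z i hi.symm]
      norm_num
  -- column lemma
  have hcol : ∀ (M : Matrix (Fin n) (Fin n) ℤ) (i : Fin n),
      M *ᵥ (e i) = fun k => M k i := by
    intro M i
    rw [he]
    exact mulVec_e M i
  -- β *ᵥ e z
  have hbcol : ∀ j : Fin n, j ≠ z →
      (betaMat n z j) *ᵥ (e z) = (3:ℤ) • e z + (-2:ℤ) • e j := by
    intro j hj
    rw [hcol]
    ext k
    simp only [betaMat, Matrix.of_apply, Pi.add_apply, Pi.smul_apply, smul_eq_mul, he]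
    by_cases hkz : k = z <;> by_cases hkj : k = j <;> simp_all
  have key : ∀ j : Fin n, j ≠ z →
      (∀ k, 3 * B k z - 2 * B k j = 3 * e z k - 2 * e j k) ∨
      (∀ k, 3 * B k z - 2 * B k j = -(3 * e z k - 2 * e j k)) := by
    intro j hj
    have hinv : (alphaMat n z j)⁻¹ = betaMat n z j :=
      inv_eq_right_inv (alpha_beta n z j hj)
    have hlhs : (betaMat n z j) *ᵥ ((alphaMat n z j * B * (alphaMat n z j)⁻¹) *ᵥ e z)
        = fun k => 3 * B k z - 2 * B k j := by
      rw [hinv, mulVec_mulVec, show betaMat n z j * (alphaMat n z j * B * betaMat n z j)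
          = B * betaMat n z j by
            rw [mul_assoc (alphaMat n z j) B, ← mul_assoc (betaMat n z j),
              mul_eq_one_comm.mp (alpha_beta n z j hj), one_mul],
        ← mulVec_mulVec, hbcol j hj, mulVec_add, mulVec_smul, mulVec_smul, hcol, hcol]
      ext k
      simp only [Pi.add_apply, Pi.smul_apply, smul_eq_mul]
      ring
    have hrhs : ∀ k, ((betaMat n z j) *ᵥ (e z)) k = 3 * e z k - 2 * e j k := by
      intro k
      rw [hbcol j hj]
      simp only [Pi.add_apply, Pi.smul_apply, smul_eq_mul]
      ring
    rcases hconj j hj with h | h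
    · left
      intro k
      have h2 : (betaMat n z j) *ᵥ ((alphaMat n z j * B * (alphaMat n z j)⁻¹) *ᵥ e z)
          = (betaMat n z j) *ᵥ (e z) := by rw [h]
      rw [hlhs] at h2
      rw [← hrhs k, ← h2]
    · right
      intro k
      have h2 : (betaMat n z j) *ᵥ ((alphaMat n z j * B * (alphaMat n z j)⁻¹) *ᵥ e z)
          = (betaMat n z j) *ᵥ (-(e z)) := by rw [h]
      rw [hlhs, Matrix.mulVec_neg] at h2
      have := congrFun h2 k
      simp only [Pi.neg_apply] at this
      rw [this, hrhs k]
  -- columns of A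
  have hAcol : ∀ i : Fin n, i ≠ z →
      (∀ k, B k i = e i k) ∨ (∀ k, B k i = -(e i k)) := by
    intro i hi
    rcases hA i hi with h | h <;> rw [hcol] at h
    · left; intro k; exact congrFun h k
    · right; intro k; simpa using congrFun h k
  have sgn : ∀ j : Fin n, j ≠ z →
      ((∀ k, B k j = e j k) ∧ (∀ k, B k z = e z k)) ∨
      ((∀ k, B k j = -(e j k)) ∧ (∀ k, B k z = -(e z k))) := by
    intro j hj
    rcases hAcol j hj with hc | hc <;> rcases key j hj with hk | hk
    · left
      refine ⟨hc, fun k => ?_⟩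
      have h1 := hk k
      have h2 := hc k
      simp only [he] at h1 h2 ⊢
      by_cases hkz : k = z
      · subst hkz
        simp only [eq_self_iff_true, if_true, if_neg (Ne.symm hj)] at h1 h2 ⊢
        omega
      · by_cases hkj : k = j
        · subst hkj
          simp only [eq_self_iff_true, if_true, if_neg hkz] at h1 h2 ⊢
          omega
        · simp only [if_neg hkz, if_neg hkj] at h1 h2 ⊢
          omega
    · exfalso
      have h1 := hk j
      have h2 := hc j
      simp only [he, eq_self_iff_true, if_true, if_neg hj] at h1 h2
      omega
    · exfalso
      have h1 := hk j
      have h2 := hc j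
      simp only [he, eq_self_iff_true, if_true, if_neg hj] at h1 h2
      omega
    · right
      refine ⟨hc, fun k => ?_⟩
      have h1 := hk k
      have h2 := hc k
      simp only [he] at h1 h2 ⊢
      by_cases hkz : k = z
      · subst hkz
        simp only [eq_self_iff_true, if_true, if_neg (Ne.symm hj)] at h1 h2 ⊢
        omega
      · by_cases hkj : k = j
        · subst hkj
          simp only [eq_self_iff_true, if_true, if_neg hkz] at h1 h2 ⊢
          omega
        · simp only [if_neg hkz, if_neg hkj] at h1 h2 ⊢
          omega
  have hj0 : (⟨1, by omega⟩ : Fin n) ≠ z := by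
    rw [hz]
    simp [Fin.ext_iff]
  rcases sgn ⟨1, by omega⟩ hj0 with ⟨-, hzc⟩ | ⟨-, hzc⟩
  · left
    ext a b
    by_cases hbz : b = z
    · subst hbz
      rw [hzc a]
      simp [he, Matrix.one_apply, eq_comm]
    · rcases sgn b hbz with ⟨hcb, -⟩ | ⟨-, hzc'⟩
      · rw [hcb a]
        simp [he, Matrix.one_apply, eq_comm]
      · exfalso
        have h1 := hzc z
        have h2 := hzc' z
        simp only [he, if_pos rfl] at h1 h2
        omega
  · right
    ext a b
    by_cases hbz : b = z
    · subst hbz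
      rw [hzc a]
      simp [he, Matrix.one_apply, Matrix.neg_apply, eq_comm]
    · rcases sgn b hbz with ⟨-, hzc'⟩ | ⟨hcb, -⟩
      · exfalso
        have h1 := hzc z
        have h2 := hzc' z
        simp only [he, if_pos rfl] at h1 h2
        omega
      · rw [hcb a]
        simp [he, Matrix.one_apply, Matrix.neg_apply, eq_comm]
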